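/- arXiv:2503.16388 — 3 statements merged into one kernel-verified Lean document; each statement's English description precedes it below -/
import Mathlib

section
/- Let W be the N×N matrix whose j-th row acts on f = (f_1,...,f_N)ᵀ by: [Wf]_1 = -(h/4)(f_1+f_2); [Wf]_j = -(h/4)((j-1)(f_{j-1}+f_j) + j(f_j+f_{j+1})) for 2 ≤ j ≤ N-1; [Wf]_N = -(h/4)((N-1)(f_{N-1}+f_N) + 2N f_N); where h = ℓ/N for some ℓ > 0. Then ‖Wf‖² ≤ ℓ² ‖f‖² for all f ∈ ℝ^N (Euclidean norm). -/
set_option maxHeartbeats 1000000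

private lemma cs3 (c1 c2 c3 a b c : ℝ) (h1 : 0 ≤ c1) (h2 : 0 ≤ c2) (h3 : 0 ≤ c3) :
    (c1*a + c2*b + c3*c)^2 ≤ (c1+c2+c3) * (c1*a^2 + c2*b^2 + c3*c^2) := by
  nlinarith [mul_nonneg (mul_nonneg h1 h2) (sq_nonneg (a-b)),
             mul_nonneg (mul_nonneg h1 h3) (sq_nonneg (a-c)),
             mul_nonneg (mul_nonneg h2 h3) (sq_nonneg (b-c))]

private lemma row_bound (h s t X Y : ℝ) (hY : 0 ≤ Y) (hst : s ≤ t) (hX : X^2 ≤ s * Y) :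
    (-(h/4) * X)^2 ≤ h^2/16 * t * Y := by
  have h3 : s * Y ≤ t * Y := mul_le_mul_of_nonneg_right hst hY
  have h4 : (0:ℝ) ≤ h^2/16 := by positivity
  calc (-(h/4)*X)^2 = h^2/16 * X^2 := by ring
    _ ≤ h^2/16 * (s*Y) := mul_le_mul_of_nonneg_left hX h4
    _ ≤ h^2/16 * (t*Y) := mul_le_mul_of_nonneg_left h3 h4
    _ = h^2/16 * t * Y := by ring

private lemma shift_sum (F : ℕ → ℝ) (d n : ℕ) :
    ∑ i ∈ Finset.range n, F (i+d) = ∑ k ∈ Finset.range (n+d), if d ≤ k then F k else 0 := by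
  induction n with
  | zero =>
    rw [Finset.range_zero, Finset.sum_empty]
    symm
    apply Finset.sum_eq_zero
    intro k hk
    rw [Finset.mem_range] at hk
    rw [if_neg (by omega)]
  | succ n ih =>
    rw [Finset.sum_range_succ, ih, show n+1+d = (n+d)+1 from by omega,
        Finset.sum_range_succ, if_pos (by omega)]

private lemma cap_sum (F : ℕ → ℝ) (d m n : ℕ) (h : m ≤ n) :
    (∑ k ∈ Finset.range m, if d ≤ k then F k else 0)
      = ∑ k ∈ Finset.range n, if d ≤ k ∧ k < m then F k else 0 := by
  have e1 : (∑ k ∈ Finset.range m, if d ≤ k then F k else 0)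
      = ∑ k ∈ Finset.range m, if d ≤ k ∧ k < m then F k else 0 :=
    Finset.sum_congr rfl fun k hk => by
      rw [Finset.mem_range] at hk
      by_cases hd : d ≤ k
      · rw [if_pos hd, if_pos ⟨hd, hk⟩]
      · rw [if_neg hd, if_neg (fun hc => hd hc.1)]
  rw [e1]
  apply Finset.sum_subset (Finset.range_subset_range.mpr h)
  intro k _ hk
  rw [Finset.mem_range] at hk
  exact if_neg (fun hc => hk hc.2)

private lemma single_sum (g : ℕ → ℝ) (b n : ℕ) (hb : b < n) :
    g b = ∑ k ∈ Finset.range n, if k = b then g k else 0 := by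
  rw [Finset.sum_ite_eq' (Finset.range n) b g, if_pos (Finset.mem_range.mpr hb)]

/-- ‖W f‖² ≤ ℓ² ‖f‖² for the multiplier matrix W. -/
theorem stmt10 (N : ℕ) (hN : 2 ≤ N) (ℓ : ℝ) (hℓ : 0 < ℓ) (h : ℝ) (hh : h = ℓ / N)
    (f Wf : ℕ → ℝ)
    (hWf1 : Wf 1 = -(h/4) * (f 1 + f 2))
    (hWfj : ∀ j, 2 ≤ j → j ≤ N - 1 →
      Wf j = -(h/4) * (((j : ℝ) - 1) * (f (j-1) + f j) + (j : ℝ) * (f j + f (j+1))))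
    (hWfN : Wf N = -(h/4) * (((N : ℝ) - 1) * (f (N-1) + f N) + 2 * (N : ℝ) * f N)) :
    ∑ j ∈ Finset.Icc 1 N, (Wf j)^2 ≤ ℓ^2 * ∑ j ∈ Finset.Icc 1 N, (f j)^2 := by
  obtain ⟨M, rfl⟩ : ∃ M, N = M + 2 := ⟨N - 2, by omega⟩
  have hM0 : ((M:ℝ)) + 2 ≠ 0 := by positivity
  have hℓ' : ℓ = h * ((M:ℝ)+2) := by
    rw [hh]; push_cast; field_simp
  have hIcc : ∀ (F : ℕ → ℝ), ∑ j ∈ Finset.Icc 1 (M+2), F j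
      = ∑ i ∈ Finset.range (M+2), F (i+1) := by
    intro F
    rw [← Finset.Ico_add_one_right_eq_Icc, Finset.sum_Ico_eq_sum_range,
        show M+2+1-1 = M+2 from by omega]
    exact Finset.sum_congr rfl fun i _ => by rw [Nat.add_comm 1 i]
  -- row 1 bound
  have hM00 : (0:ℝ) ≤ (M:ℝ) := Nat.cast_nonneg M
  have hrow1 : (Wf 1)^2 ≤ h^2/16*(4*(M:ℝ)+8) * (f 1^2 + f 2^2) := by
    rw [hWf1]
    exact row_bound h 2 (4*(M:ℝ)+8) _ _ (by positivity) (by linarith)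
      (by nlinarith [sq_nonneg (f 1 - f 2)])
  -- middle rows
  have hrowm : ∀ i ∈ Finset.range M, (Wf (i+2))^2
      ≤ h^2/16*(4*(M:ℝ)+8) * (((i:ℝ)+1) * f (i+1)^2 + (2*(i:ℝ)+3) * f (i+2)^2
          + ((i:ℝ)+2) * f (i+3)^2) := by
    intro i hi
    rw [Finset.mem_range] at hi
    have hj := hWfj (i+2) (by omega) (by omega)
    rw [show i+2-1 = i+1 from by omega, show i+2+1 = i+3 from by omega] at hj
    push_cast at hj
    have hXeq : Wf (i+2) = -(h/4) * (((i:ℝ)+1) * f (i+1) + (2*(i:ℝ)+3) * f (i+2)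
        + ((i:ℝ)+2) * f (i+3)) := by rw [hj]; ring
    rw [hXeq]
    have h0 : (0:ℝ) ≤ (i:ℝ) := Nat.cast_nonneg i
    have hiM : (i:ℝ) ≤ (M:ℝ) := by exact_mod_cast hi.le
    exact row_bound h (((i:ℝ)+1) + (2*(i:ℝ)+3) + ((i:ℝ)+2)) (4*(M:ℝ)+8) _ _
      (by positivity) (by linarith)
      (cs3 _ _ _ _ _ _ (by linarith) (by linarith) (by linarith))
  -- last row
  have hWfN' := hWfN
  rw [show M+2-1 = M+1 from by omega] at hWfN'
  push_cast at hWfN'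
  have hrowN : (Wf (M+2))^2
      ≤ h^2/16*(4*(M:ℝ)+8) * (((M+1:ℕ):ℝ) * f (M+1)^2 + ((3*M+5:ℕ):ℝ) * f (M+2)^2) := by
    have hXeq : Wf (M+2) = -(h/4) * (((M:ℝ)+1) * f (M+1) + (3*(M:ℝ)+5) * f (M+2)) := by
      rw [hWfN']; ring
    rw [hXeq]
    refine row_bound h (((M:ℝ)+1) + (3*(M:ℝ)+5)) (4*(M:ℝ)+8) _ _ ?_ ?_ ?_
    · positivity
    · linarith
    · push_cast
      nlinarith [mul_nonneg (mul_nonneg (show (0:ℝ) ≤ (M:ℝ)+1 by linarith)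
        (show (0:ℝ) ≤ 3*(M:ℝ)+5 by linarith)) (sq_nonneg (f (M+1) - f (M+2)))]
  -- middle sum bound
  have hmid : (∑ i ∈ Finset.range M, (Wf (i+2))^2)
      ≤ h^2/16*(4*(M:ℝ)+8) * ∑ i ∈ Finset.range M,
        (((i:ℝ)+1) * f (i+1)^2 + (2*(i:ℝ)+3) * f (i+2)^2 + ((i:ℝ)+2) * f (i+3)^2) := by
    rw [Finset.mul_sum]
    exact Finset.sum_le_sum hrowm
  -- splitting the full sum
  have hsplit : ∑ i ∈ Finset.range (M+2), (Wf (i+1))^2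
      = (Wf 1)^2 + (∑ i ∈ Finset.range M, (Wf (i+2))^2) + (Wf (M+2))^2 := by
    rw [show M+2 = M+1+1 from by omega, Finset.sum_range_succ, Finset.sum_range_succ']
    simp only [show ∀ i, i+1+1 = i+2 from fun i => by omega, Nat.zero_add]
    ring
  -- reindexing pieces
  have hTsplit : (∑ i ∈ Finset.range M,
      (((i:ℝ)+1) * f (i+1)^2 + (2*(i:ℝ)+3) * f (i+2)^2 + ((i:ℝ)+2) * f (i+3)^2))
      = (∑ i ∈ Finset.range M, ((i:ℝ)+1) * f (i+1)^2)
        + (∑ i ∈ Finset.range M, (2*(i:ℝ)+3) * f (i+2)^2)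
        + (∑ i ∈ Finset.range M, ((i:ℝ)+2) * f (i+3)^2) := by
    rw [Finset.sum_add_distrib, Finset.sum_add_distrib]
  have hT1 : (∑ i ∈ Finset.range M, ((i:ℝ)+1) * f (i+1)^2)
      = ∑ k ∈ Finset.range (M+3), if 1 ≤ k ∧ k < M+1 then ((k:ℕ):ℝ) * f k^2 else 0 := by
    rw [show (∑ i ∈ Finset.range M, ((i:ℝ)+1) * f (i+1)^2)
        = ∑ i ∈ Finset.range M, (fun k => ((k:ℕ):ℝ) * f k^2) (i+1) from
      Finset.sum_congr rfl fun i _ => by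
        show ((i:ℝ)+1) * f (i+1)^2 = ((i+1:ℕ):ℝ) * f (i+1)^2
        push_cast; ring]
    rw [shift_sum (fun k => ((k:ℕ):ℝ) * f k^2) 1 M]
    exact cap_sum _ 1 (M+1) (M+3) (by omega)
  have hT2 : (∑ i ∈ Finset.range M, (2*(i:ℝ)+3) * f (i+2)^2)
      = ∑ k ∈ Finset.range (M+3), if 2 ≤ k ∧ k < M+2 then ((2*k-1:ℕ):ℝ) * f k^2 else 0 := by
    rw [show (∑ i ∈ Finset.range M, (2*(i:ℝ)+3) * f (i+2)^2)
        = ∑ i ∈ Finset.range M, (fun k => ((2*k-1:ℕ):ℝ) * f k^2) (i+2) from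
      Finset.sum_congr rfl fun i _ => by
        show (2*(i:ℝ)+3) * f (i+2)^2 = ((2*(i+2)-1:ℕ):ℝ) * f (i+2)^2
        rw [show 2*(i+2)-1 = 2*i+3 from by omega]
        push_cast; ring]
    rw [shift_sum (fun k => ((2*k-1:ℕ):ℝ) * f k^2) 2 M]
    exact cap_sum _ 2 (M+2) (M+3) (by omega)
  have hT3 : (∑ i ∈ Finset.range M, ((i:ℝ)+2) * f (i+3)^2)
      = ∑ k ∈ Finset.range (M+3), if 3 ≤ k ∧ k < M+3 then ((k-1:ℕ):ℝ) * f k^2 else 0 := by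
    rw [show (∑ i ∈ Finset.range M, ((i:ℝ)+2) * f (i+3)^2)
        = ∑ i ∈ Finset.range M, (fun k => ((k-1:ℕ):ℝ) * f k^2) (i+3) from
      Finset.sum_congr rfl fun i _ => by
        show ((i:ℝ)+2) * f (i+3)^2 = ((i+3-1:ℕ):ℝ) * f (i+3)^2
        rw [show i+3-1 = i+2 from by omega]
        push_cast; ring]
    rw [shift_sum (fun k => ((k-1:ℕ):ℝ) * f k^2) 3 M]
    exact cap_sum _ 3 (M+3) (M+3) le_rfl
  have hb1 : f 1^2 = ∑ k ∈ Finset.range (M+3), if k = 1 then f k^2 else 0 :=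
    single_sum (fun k => f k^2) 1 (M+3) (by omega)
  have hb2 : f 2^2 = ∑ k ∈ Finset.range (M+3), if k = 2 then f k^2 else 0 :=
    single_sum (fun k => f k^2) 2 (M+3) (by omega)
  have hbM1 : ((M+1:ℕ):ℝ) * f (M+1)^2
      = ∑ k ∈ Finset.range (M+3), if k = M+1 then ((M+1:ℕ):ℝ) * f k^2 else 0 :=
    single_sum (fun k => ((M+1:ℕ):ℝ) * f k^2) (M+1) (M+3) (by omega)
  have hbM2 : ((3*M+5:ℕ):ℝ) * f (M+2)^2
      = ∑ k ∈ Finset.range (M+3), if k = M+2 then ((3*M+5:ℕ):ℝ) * f k^2 else 0 :=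
    single_sum (fun k => ((3*M+5:ℕ):ℝ) * f k^2) (M+2) (M+3) (by omega)
  have hR : (4*(M:ℝ)+8) * (∑ i ∈ Finset.range (M+2), f (i+1)^2)
      = ∑ k ∈ Finset.range (M+3), if 1 ≤ k then ((4*M+8:ℕ):ℝ) * f k^2 else 0 := by
    rw [Finset.mul_sum]
    rw [show (∑ i ∈ Finset.range (M+2), (4*(M:ℝ)+8) * f (i+1)^2)
        = ∑ i ∈ Finset.range (M+2), (fun k => ((4*M+8:ℕ):ℝ) * f k^2) (i+1) from
      Finset.sum_congr rfl fun i _ => by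
        show (4*(M:ℝ)+8) * f (i+1)^2 = ((4*M+8:ℕ):ℝ) * f (i+1)^2
        push_cast; ring]
    rw [shift_sum (fun k => ((4*M+8:ℕ):ℝ) * f k^2) 1 (M+2),
        show M+2+1 = M+3 from by omega]
  -- pointwise coefficient comparison
  have key : ∀ k ∈ Finset.range (M+3),
      ((if 1 ≤ k ∧ k < M+1 then ((k:ℕ):ℝ) * f k^2 else 0)
        + (if 2 ≤ k ∧ k < M+2 then ((2*k-1:ℕ):ℝ) * f k^2 else 0)
        + (if 3 ≤ k ∧ k < M+3 then ((k-1:ℕ):ℝ) * f k^2 else 0)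
        + (if k = 1 then f k^2 else 0) + (if k = 2 then f k^2 else 0)
        + (if k = M+1 then ((M+1:ℕ):ℝ) * f k^2 else 0)
        + (if k = M+2 then ((3*M+5:ℕ):ℝ) * f k^2 else 0))
      ≤ (if 1 ≤ k then ((4*M+8:ℕ):ℝ) * f k^2 else 0) := by
    intro k _
    have e : ((if 1 ≤ k ∧ k < M+1 then ((k:ℕ):ℝ) * f k^2 else 0)
        + (if 2 ≤ k ∧ k < M+2 then ((2*k-1:ℕ):ℝ) * f k^2 else 0)
        + (if 3 ≤ k ∧ k < M+3 then ((k-1:ℕ):ℝ) * f k^2 else 0)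
        + (if k = 1 then f k^2 else 0) + (if k = 2 then f k^2 else 0)
        + (if k = M+1 then ((M+1:ℕ):ℝ) * f k^2 else 0)
        + (if k = M+2 then ((3*M+5:ℕ):ℝ) * f k^2 else 0))
        = (((if 1 ≤ k ∧ k < M+1 then k else 0) + (if 2 ≤ k ∧ k < M+2 then 2*k-1 else 0)
            + (if 3 ≤ k ∧ k < M+3 then k-1 else 0) + (if k = 1 then 1 else 0)
            + (if k = 2 then 1 else 0) + (if k = M+1 then M+1 else 0)
            + (if k = M+2 then 3*M+5 else 0) : ℕ) : ℝ) * f k^2 := by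
      push_cast [apply_ite (fun n : ℕ => (n:ℝ)), ite_mul, zero_mul, add_mul, one_mul]
      try ring
    rw [e]
    by_cases h1 : 1 ≤ k
    · rw [if_pos h1]
      have hcoef : ((if 1 ≤ k ∧ k < M+1 then k else 0) + (if 2 ≤ k ∧ k < M+2 then 2*k-1 else 0)
            + (if 3 ≤ k ∧ k < M+3 then k-1 else 0) + (if k = 1 then 1 else 0)
            + (if k = 2 then 1 else 0) + (if k = M+1 then M+1 else 0)
            + (if k = M+2 then 3*M+5 else 0)) ≤ 4*M+8 := by
        split_ifs <;> omega
      exact mul_le_mul_of_nonneg_right (by exact_mod_cast hcoef) (sq_nonneg _)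
    · rw [if_neg h1]
      have hk0 : k = 0 := by omega
      subst hk0
      have hz : ((if 1 ≤ 0 ∧ 0 < M+1 then 0 else 0) + (if 2 ≤ 0 ∧ 0 < M+2 then 2*0-1 else 0)
            + (if 3 ≤ 0 ∧ 0 < M+3 then 0-1 else 0) + (if 0 = 1 then 1 else 0)
            + (if 0 = 2 then 1 else 0) + (if 0 = M+1 then M+1 else 0)
            + (if 0 = M+2 then 3*M+5 else 0)) = 0 := by
        have c6 : ¬ (0 = M+1) := by omega
        have c7 : ¬ (0 = M+2) := by omega
        norm_num [c6, c7]
      rw [hz]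
      simp
  -- the key column-sum inequality
  have hB : f 1^2 + f 2^2
      + (∑ i ∈ Finset.range M,
          (((i:ℝ)+1) * f (i+1)^2 + (2*(i:ℝ)+3) * f (i+2)^2 + ((i:ℝ)+2) * f (i+3)^2))
      + (((M+1:ℕ):ℝ) * f (M+1)^2 + ((3*M+5:ℕ):ℝ) * f (M+2)^2)
      ≤ (4*(M:ℝ)+8) * (∑ i ∈ Finset.range (M+2), f (i+1)^2) := by
    have hbig := Finset.sum_le_sum key
    rw [hTsplit, hT1, hT2, hT3, hb1, hb2, hbM1, hbM2, hR]
    refine le_trans (le_of_eq ?_) hbig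
    simp only [Finset.sum_add_distrib]
    ring
  calc ∑ j ∈ Finset.Icc 1 (M+2), (Wf j)^2
      = ∑ i ∈ Finset.range (M+2), (Wf (i+1))^2 := hIcc _
    _ = (Wf 1)^2 + (∑ i ∈ Finset.range M, (Wf (i+2))^2) + (Wf (M+2))^2 := hsplit
    _ ≤ h^2/16*(4*(M:ℝ)+8) * (f 1^2 + f 2^2)
        + (h^2/16*(4*(M:ℝ)+8) * ∑ i ∈ Finset.range M,
            (((i:ℝ)+1) * f (i+1)^2 + (2*(i:ℝ)+3) * f (i+2)^2 + ((i:ℝ)+2) * f (i+3)^2))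
        + h^2/16*(4*(M:ℝ)+8) * (((M+1:ℕ):ℝ) * f (M+1)^2 + ((3*M+5:ℕ):ℝ) * f (M+2)^2) :=
      add_le_add (add_le_add hrow1 hmid) hrowN
    _ = h^2/16*(4*(M:ℝ)+8) * (f 1^2 + f 2^2
        + (∑ i ∈ Finset.range M,
            (((i:ℝ)+1) * f (i+1)^2 + (2*(i:ℝ)+3) * f (i+2)^2 + ((i:ℝ)+2) * f (i+3)^2))
        + (((M+1:ℕ):ℝ) * f (M+1)^2 + ((3*M+5:ℕ):ℝ) * f (M+2)^2)) := by ring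
    _ ≤ h^2/16*(4*(M:ℝ)+8) * ((4*(M:ℝ)+8) * (∑ i ∈ Finset.range (M+2), f (i+1)^2)) :=
      mul_le_mul_of_nonneg_left hB (by positivity)
    _ = ℓ^2 * ∑ i ∈ Finset.range (M+2), f (i+1)^2 := by rw [hℓ']; ring
    _ = ℓ^2 * ∑ j ∈ Finset.Icc 1 (M+2), (f j)^2 :=
      congrArg (fun x => ℓ^2 * x) (hIcc (fun j => (f j)^2)).symm
end

section
/- Let θ_1,...,θ_N > 0 with inverses θ̄_k = 1/θ_k, Q̃ = diag(θ_1,...,θ_N), M = (1/2)(I_N + Lᵀ), C the tridiagonal matrix with [C]_{1,2}=1/2, [C]_{j,j±1} = ±j/2 for 2≤j≤N-1, [C]_{N,N-1}=-N, [C]_{N,N}=N, and O the symmetric tridiagonal matrix with zero diagonal and [O]_{j,j+1} = (j/2)(θ_{j+1}-θ_j). Then for any h>0, ℓ = Nh, and all f ∈ ℝ^N: h⟨M Q̃^{-1} Mᵀ f, C f⟩ ≤ -(h/2) fᵀ M Q̃^{-1}(Q̃ - O) Q̃^{-1} Mᵀ f + (ℓ θ̄_N / 2) fᵀ t_r t_rᵀ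 f. -/
set_option maxHeartbeats 1000000

open Matrix Finset

lemma sum_ite_val {N : ℕ} (v : Fin N → ℝ) (t : ℕ) :
    (∑ j : Fin N, if (j : ℕ) = t then v j else 0) = if h : t < N then v ⟨t, h⟩ else 0 := by
  split_ifs with h
  · rw [Finset.sum_eq_single ⟨t, h⟩]
    · simp
    · intro j _ hj
      rw [if_neg]
      simpa [Fin.ext_iff] using hj
    · simp
  · refine Finset.sum_eq_zero fun j _ => if_neg ?_
    have := j.isLt
    omega

lemma master_tele (a c : ℕ → ℝ) (M' : ℕ) :
    ∑ j ∈ Finset.range M',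
      (((j:ℝ)+1)/4 * (a (j+2) - a (j+1)) + a (j+1)/4 + ((j:ℝ)+1)/8 * c (j+1) - (j:ℝ)/8 * c j)
      = (M':ℝ)/4 * a (M'+1) + (M':ℝ)/8 * c M' := by
  induction M' with
  | zero => simp
  | succ n ih =>
    rw [Finset.sum_range_succ, ih]
    push_cast
    ring

/-- Lemma (inequality): h⟨M Q̃⁻¹ Mᵀ f, C f⟩
    ≤ -(h/2) fᵀ M Q̃⁻¹ (Q̃-O) Q̃⁻¹ Mᵀ f + (ℓ θ̄_N/2) fᵀ t_r t_rᵀ f. -/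
theorem stmt12 (N : ℕ) (hN : 2 ≤ N) (h ℓ : ℝ) (hh : 0 < h) (hℓ : ℓ = N * h)
    (θ : ℕ → ℝ) (hθ : ∀ i, 1 ≤ i → i ≤ N → 0 < θ i)
    (Q Qinv L M C O Tr : Matrix (Fin N) (Fin N) ℝ)
    (hQ : Q = Matrix.diagonal (fun i : Fin N => θ ((i : ℕ) + 1)))
    (hQinv : Qinv = Matrix.diagonal (fun i : Fin N => (θ ((i : ℕ) + 1))⁻¹))
    (hL : ∀ i j, L i j = if (i : ℕ) = (j : ℕ) + 1 then 1 else 0)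
    (hM : M = (1/2 : ℝ) • (1 + Lᵀ))
    (hC : ∀ i j : Fin N, C i j =
      if (i : ℕ) + 1 = N then
        (if (j : ℕ) + 2 = N then -(N : ℝ) else if (j : ℕ) + 1 = N then (N : ℝ) else 0)
      else if (j : ℕ) = (i : ℕ) + 1 then (((i : ℕ) + 1 : ℝ)) / 2
      else if (i : ℕ) = (j : ℕ) + 1 then -(((i : ℕ) + 1 : ℝ)) / 2
      else 0)
    (hO : ∀ i j : Fin N, O i j =
      if (j : ℕ) = (i : ℕ) + 1 then (((i : ℕ) + 1 : ℝ)) / 2 * (θ ((i : ℕ) + 2) - θ ((i : ℕ) + 1))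
      else if (i : ℕ) = (j : ℕ) + 1 then (((j : ℕ) + 1 : ℝ)) / 2 * (θ ((j : ℕ) + 2) - θ ((j : ℕ) + 1))
      else 0)
    (hTr : Tr = Matrix.vecMulVec (fun i : Fin N => if (i : ℕ) + 1 = N then (1:ℝ) else 0)
      (fun i : Fin N => if (i : ℕ) + 1 = N then (1:ℝ) else 0)) :
    ∀ f : Fin N → ℝ,
      h * (((M * Qinv * Mᵀ) *ᵥ f) ⬝ᵥ (C *ᵥ f)) ≤
        -(h/2) * (f ⬝ᵥ ((M * Qinv * (Q - O) * Qinv * Mᵀ) *ᵥ f))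
          + (ℓ * (θ N)⁻¹ / 2) * (f ⬝ᵥ (Tr *ᵥ f)) := by
  intro f
  obtain ⟨m, rfl⟩ : ∃ m, N = m + 2 := ⟨N - 2, by omega⟩
  -- padded 1-indexed entries of f
  set Fm : ℕ → ℝ := fun k => match k with
    | 0 => 0
    | Nat.succ t => if ht : t < m + 2 then f ⟨t, ht⟩ else 0 with hFm
  set s : ℕ → ℝ := fun k => Fm k + Fm (k-1) with hs
  set U : ℕ → ℝ := fun k => (θ k)⁻¹ * s k / 2 with hU
  set u : Fin (m+2) → ℝ := Qinv *ᵥ (Mᵀ *ᵥ f) with hudef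
  have hFmval : ∀ (t : ℕ) (ht : t < m+2), Fm (t+1) = f ⟨t, ht⟩ := by
    intro t ht; simp only [hFm]; exact dif_pos ht
  have hFm0 : Fm 0 = 0 := by simp [hFm]
  have hsval : ∀ t : ℕ, s (t+1) = Fm (t+1) + Fm t := by intro t; simp [hs]
  have hfval : ∀ (i : Fin (m+2)), f i = Fm ((i:ℕ)+1) := by
    intro i; rw [hFmval _ i.isLt]
  -- row lemmas
  have hg : ∀ i : Fin (m+2), (Mᵀ *ᵥ f) i = s ((i:ℕ)+1) / 2 := by
    intro i
    have e : (Mᵀ *ᵥ f) i = ∑ j, ((1/2) * (if j = i then f j else 0)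
        + (1/2) * (if (i:ℕ) = (j:ℕ)+1 then f j else 0)) := by
      simp only [Matrix.mulVec, dotProduct, Matrix.transpose_apply]
      refine Finset.sum_congr rfl fun j _ => ?_
      rw [hM]
      simp only [Matrix.smul_apply, Matrix.add_apply, Matrix.one_apply,
        Matrix.transpose_apply, hL, smul_eq_mul]
      split_ifs <;> ring
    rw [e, Finset.sum_add_distrib, ← Finset.mul_sum, ← Finset.mul_sum,
      Finset.sum_ite_eq' Finset.univ i f]
    simp only [Finset.mem_univ, if_true]
    by_cases hi0 : (i:ℕ) = 0
    · have hz : (∑ j : Fin (m+2), if (i:ℕ) = (j:ℕ)+1 then f j else 0) = 0 :=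
        Finset.sum_eq_zero fun j _ => if_neg (by omega)
      rw [hz, hfval i, hi0, hsval 0, hFm0]
      ring
    · obtain ⟨t, hi⟩ : ∃ t, (i:ℕ) = t+1 := ⟨(i:ℕ)-1, by omega⟩
      have ht : t < m+2 := by have := i.isLt; omega
      have e2 : (∑ j : Fin (m+2), if (i:ℕ) = (j:ℕ)+1 then f j else 0)
          = ∑ j : Fin (m+2), if (j:ℕ) = t then f j else 0 := by
        refine Finset.sum_congr rfl fun j _ => ?_
        rw [hi]
        by_cases hj : (j:ℕ) = t
        · rw [if_pos (by omega), if_pos hj]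
        · rw [if_neg (by omega), if_neg hj]
      rw [e2, sum_ite_val f t, dif_pos ht, hfval i, hi, ← hFmval t ht, hsval (t+1)]
      ring
  have hu : ∀ i : Fin (m+2), u i = U ((i:ℕ)+1) := by
    intro i
    rw [hudef, hQinv, Matrix.mulVec_diagonal, hg i, hU, hs]
    ring
  have hMu : ∀ i : Fin (m+2), (M *ᵥ u) i
      = (U ((i:ℕ)+1) + (if (i:ℕ)+2 ≤ m+2 then U ((i:ℕ)+2) else 0)) / 2 := by
    intro i
    have e : (M *ᵥ u) i = ∑ j, ((1/2) * (if i = j then u j else 0)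
        + (1/2) * (if (j:ℕ) = (i:ℕ)+1 then u j else 0)) := by
      simp only [Matrix.mulVec, dotProduct]
      refine Finset.sum_congr rfl fun j _ => ?_
      rw [hM]
      simp only [Matrix.smul_apply, Matrix.add_apply, Matrix.one_apply,
        Matrix.transpose_apply, hL, smul_eq_mul]
      split_ifs <;> ring
    rw [e, Finset.sum_add_distrib, ← Finset.mul_sum, ← Finset.mul_sum,
      Finset.sum_ite_eq Finset.univ i u, sum_ite_val u ((i:ℕ)+1)]
    simp only [Finset.mem_univ, if_true]
    by_cases hlt : (i:ℕ)+1 < m+2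
    · rw [dif_pos hlt, if_pos (by omega)]
      have e2 : u ⟨(i:ℕ)+1, hlt⟩ = U ((i:ℕ)+2) := by rw [hu ⟨(i:ℕ)+1, hlt⟩]
      rw [e2, hu i]
      ring
    · rw [dif_neg hlt, if_neg (by omega), hu i]
      ring
  have hCf : ∀ i : Fin (m+2), (C *ᵥ f) i
      = (if (i:ℕ)+1 = m+2 then ((m:ℝ)+2)*(Fm (m+2) - Fm (m+1))
         else (((i:ℕ):ℝ)+1)/2 * (s ((i:ℕ)+2) - s ((i:ℕ)+1))) := by
    intro i
    show ∑ j, C i j * f j = _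
    by_cases hi : (i:ℕ)+1 = m+2
    · rw [if_pos hi]
      have e : ∑ j, C i j * f j = ∑ j : Fin (m+2),
          ((if (j:ℕ) = m then -((m:ℝ)+2) * f j else 0)
           + (if (j:ℕ) = m+1 then ((m:ℝ)+2) * f j else 0)) := by
        refine Finset.sum_congr rfl fun j _ => ?_
        rw [hC i j]
        split_ifs <;> first | ring1 | (push_cast; ring1) | (exfalso; omega)
      rw [e, Finset.sum_add_distrib, sum_ite_val, sum_ite_val,
        dif_pos (by omega : m < m+2), dif_pos (by omega : m+1 < m+2),
        ← hFmval m (by omega), ← hFmval (m+1) (by omega)]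
      ring
    · rw [if_neg hi]
      have hlt : (i:ℕ)+1 < m+2 := by have := i.isLt; omega
      by_cases hi0 : (i:ℕ) = 0
      · have e : ∑ j, C i j * f j = ∑ j : Fin (m+2),
            (if (j:ℕ) = (i:ℕ)+1 then (((i:ℕ):ℝ)+1)/2 * f j else 0) := by
          refine Finset.sum_congr rfl fun j _ => ?_
          rw [hC i j]
          split_ifs <;> first | ring1 | (push_cast; ring1) | (exfalso; omega)
        rw [e, sum_ite_val, dif_pos hlt]
        have e2 : f ⟨(i:ℕ)+1, hlt⟩ = Fm ((i:ℕ)+2) := (hFmval ((i:ℕ)+1) hlt).symm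
        rw [e2, hi0, hsval 1, hsval 0, hFm0]
        norm_num
      · obtain ⟨t, hit⟩ : ∃ t, (i:ℕ) = t+1 := ⟨(i:ℕ)-1, by omega⟩
        have e : ∑ j, C i j * f j = ∑ j : Fin (m+2),
            ((if (j:ℕ) = (i:ℕ)+1 then (((i:ℕ):ℝ)+1)/2 * f j else 0)
             + (if (j:ℕ) = t then -(((i:ℕ):ℝ)+1)/2 * f j else 0)) := by
          refine Finset.sum_congr rfl fun j _ => ?_
          rw [hC i j]
          split_ifs <;> first | ring1 | (push_cast; ring1) | (exfalso; omega)
        rw [e, Finset.sum_add_distrib, sum_ite_val, sum_ite_val,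
          dif_pos hlt, dif_pos (by omega : t < m+2),
          ← hFmval ((i:ℕ)+1) hlt]
        have e3 : f ⟨t, by omega⟩ = Fm (t+1) := (hFmval t (by omega)).symm
        rw [e3, hit, hsval (t+2), hsval (t+1)]
        ring
  have hQOu : ∀ i : Fin (m+2), ((Q - O) *ᵥ u) i
      = θ ((i:ℕ)+1) * U ((i:ℕ)+1)
        - ((if (i:ℕ)+2 ≤ m+2 then (((i:ℕ):ℝ)+1)/2*(θ ((i:ℕ)+2)-θ ((i:ℕ)+1)) * U ((i:ℕ)+2) else 0)
           + ((i:ℕ):ℝ)/2*(θ ((i:ℕ)+1)-θ (i:ℕ)) * U (i:ℕ)) := by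
    intro i
    rw [Matrix.sub_mulVec]
    have hQu : (Q *ᵥ u) i = θ ((i:ℕ)+1) * U ((i:ℕ)+1) := by
      rw [hQ, Matrix.mulVec_diagonal, hu i]
    have hOu : (O *ᵥ u) i
        = (if (i:ℕ)+2 ≤ m+2 then (((i:ℕ):ℝ)+1)/2*(θ ((i:ℕ)+2)-θ ((i:ℕ)+1)) * U ((i:ℕ)+2) else 0)
           + ((i:ℕ):ℝ)/2*(θ ((i:ℕ)+1)-θ (i:ℕ)) * U (i:ℕ) := by
      by_cases hi0 : (i:ℕ) = 0
      · have e : (O *ᵥ u) i = ∑ j : Fin (m+2),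
            (if (j:ℕ) = (i:ℕ)+1 then (((i:ℕ):ℝ)+1)/2*(θ ((i:ℕ)+2)-θ ((i:ℕ)+1)) * u j else 0) := by
          show ∑ j, O i j * u j = _
          refine Finset.sum_congr rfl fun j _ => ?_
          rw [hO i j]
          split_ifs <;> first | ring1 | (push_cast; ring1) | (exfalso; omega)
        have hlt : (i:ℕ)+1 < m+2 := by omega
        rw [e, sum_ite_val, dif_pos hlt]
        have e2 : u ⟨(i:ℕ)+1, hlt⟩ = U ((i:ℕ)+2) := by rw [hu ⟨(i:ℕ)+1, hlt⟩]
        rw [e2, if_pos (by omega), hi0]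
        norm_num
      · obtain ⟨t, hit⟩ : ∃ t, (i:ℕ) = t+1 := ⟨(i:ℕ)-1, by omega⟩
        have e : (O *ᵥ u) i = ∑ j : Fin (m+2),
            ((if (j:ℕ) = (i:ℕ)+1 then (((i:ℕ):ℝ)+1)/2*(θ ((i:ℕ)+2)-θ ((i:ℕ)+1)) * u j else 0)
             + (if (j:ℕ) = t then (((j:ℕ):ℝ)+1)/2*(θ ((j:ℕ)+2)-θ ((j:ℕ)+1)) * u j else 0)) := by
          show ∑ j, O i j * u j = _
          refine Finset.sum_congr rfl fun j _ => ?_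
          rw [hO i j]
          split_ifs <;> first | ring1 | (push_cast; ring1) | (exfalso; omega)
        rw [e, Finset.sum_add_distrib, sum_ite_val, sum_ite_val, dif_pos (by omega : t < m+2)]
        have e3 : u ⟨t, by omega⟩ = U (t+1) := by rw [hu ⟨t, by omega⟩]
        simp only [Fin.val_mk] at e3 ⊢
        rw [e3]
        by_cases hlt : (i:ℕ)+1 < m+2
        · rw [dif_pos hlt]
          have e2 : u ⟨(i:ℕ)+1, hlt⟩ = U ((i:ℕ)+2) := by rw [hu ⟨(i:ℕ)+1, hlt⟩]
          rw [e2, if_pos (by omega), hit]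
          push_cast
          ring
        · rw [dif_neg hlt, if_neg (by omega), hit]
          push_cast
          ring
    rw [Pi.sub_apply, hQu, hOu]
  -- the summand functions
  set φ1 : ℕ → ℝ := fun k =>
    ((U (k+1) + (if k+2 ≤ m+2 then U (k+2) else 0)) / 2) *
      (if k+1 = m+2 then ((m:ℝ)+2)*(Fm (m+2) - Fm (m+1))
       else ((k:ℝ)+1)/2 * (s (k+2) - s (k+1))) with hφ1
  set φ2 : ℕ → ℝ := fun k =>
    U (k+1) * (θ (k+1) * U (k+1)
      - ((if k+2 ≤ m+2 then ((k:ℝ)+1)/2*(θ (k+2)-θ (k+1)) * U (k+2) else 0)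
         + (k:ℝ)/2*(θ (k+1)-θ k) * U k)) with hφ2
  have hS1 : ((M * Qinv * Mᵀ) *ᵥ f) ⬝ᵥ (C *ᵥ f) = ∑ k ∈ Finset.range (m+2), φ1 k := by
    have h1 : (M * Qinv * Mᵀ) *ᵥ f = M *ᵥ u := by
      rw [hudef, Matrix.mulVec_mulVec, Matrix.mulVec_mulVec]
    rw [h1, dotProduct, ← Fin.sum_univ_eq_sum_range]
    exact Finset.sum_congr rfl fun i _ => by rw [hMu i, hCf i, hφ1]
  have hS2 : f ⬝ᵥ ((M * Qinv * (Q - O) * Qinv * Mᵀ) *ᵥ f) = ∑ k ∈ Finset.range (m+2), φ2 k := by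
    have h1 : (M * Qinv * (Q - O) * Qinv * Mᵀ) *ᵥ f = M *ᵥ (Qinv *ᵥ ((Q - O) *ᵥ u)) := by
      rw [hudef, Matrix.mulVec_mulVec, Matrix.mulVec_mulVec, Matrix.mulVec_mulVec,
        Matrix.mulVec_mulVec]
    have hQs : Qinvᵀ = Qinv := by rw [hQinv, Matrix.diagonal_transpose]
    rw [h1, Matrix.dotProduct_mulVec f M, ← Matrix.mulVec_transpose,
      Matrix.dotProduct_mulVec _ Qinv, ← Matrix.mulVec_transpose, hQs, ← hudef,
      dotProduct, ← Fin.sum_univ_eq_sum_range]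
    exact Finset.sum_congr rfl fun i _ => by rw [hu i, hQOu i, hφ2]
  have hTrf : f ⬝ᵥ (Tr *ᵥ f) = (Fm (m+2))^2 := by
    have h1 : Tr *ᵥ f = fun i : Fin (m+2) => if (i:ℕ)+1 = m+2 then Fm (m+2) else 0 := by
      funext i
      rw [hTr]
      show ∑ j, (Matrix.vecMulVec _ _) i j * f j = _
      simp only [Matrix.vecMulVec_apply]
      by_cases hi : (i:ℕ)+1 = m+2
      · have e : ∑ j : Fin (m+2), ((if (i:ℕ)+1 = m+2 then (1:ℝ) else 0)
              * (if (j:ℕ)+1 = m+2 then (1:ℝ) else 0)) * f j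
            = ∑ j : Fin (m+2), (if (j:ℕ) = m+1 then f j else 0) := by
          refine Finset.sum_congr rfl fun j _ => ?_
          split_ifs <;> first | ring1 | (push_cast; ring1) | (exfalso; omega)
        rw [e, sum_ite_val, dif_pos (by omega : m+1 < m+2), ← hFmval (m+1) (by omega),
          if_pos hi]
      · have hz : ∀ j : Fin (m+2), ((if (i:ℕ)+1 = m+2 then (1:ℝ) else 0)
              * (if (j:ℕ)+1 = m+2 then (1:ℝ) else 0)) * f j = 0 := fun j => by
          rw [if_neg hi, zero_mul, zero_mul]
        rw [Finset.sum_eq_zero fun j _ => hz j, if_neg hi]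
    rw [h1]
    show ∑ i : Fin (m+2), f i * _ = _
    have e : ∑ i : Fin (m+2), f i * (if (i:ℕ)+1 = m+2 then Fm (m+2) else 0)
        = ∑ i : Fin (m+2), (if (i:ℕ) = m+1 then f i * Fm (m+2) else 0) := by
      refine Finset.sum_congr rfl fun i _ => ?_
      split_ifs <;> first | ring1 | (push_cast; ring1) | (exfalso; omega)
    rw [e, sum_ite_val, dif_pos (by omega : m+1 < m+2), ← hFmval (m+1) (by omega)]
    ring
  have hne : ∀ k, 1 ≤ k → k ≤ m+2 → θ k ≠ 0 := fun k h1 h2 => (hθ k h1 h2).ne'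
  have hs0 : s 0 = 0 := by simp [hs, hFm0]
  set aa : ℕ → ℝ := fun t => (θ t)⁻¹ * (s t)^2 with haa
  set cc : ℕ → ℝ := fun t => s t * s (t+1) * ((θ t)⁻¹ - (θ (t+1))⁻¹) with hcc
  have key : 2 * (∑ k ∈ Finset.range (m+2), φ1 k) + (∑ k ∈ Finset.range (m+2), φ2 k)
      = ((m:ℝ)+2) * (θ (m+2))⁻¹ * (Fm (m+2))^2
        - ((m:ℝ)+2)/4 * (θ (m+2))⁻¹ * (Fm (m+1) - Fm (m+2))^2 := by
    have hrow : ∑ k ∈ Finset.range (m+1), (2 * φ1 k + φ2 k)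
        = ∑ j ∈ Finset.range (m+1),
            (((j:ℝ)+1)/4 * (aa (j+2) - aa (j+1)) + aa (j+1)/4
             + ((j:ℝ)+1)/8 * cc (j+1) - (j:ℝ)/8 * cc j) := by
      refine Finset.sum_congr rfl fun j hj => ?_
      rw [Finset.mem_range] at hj
      simp only [hφ1, hφ2, hU, haa, hcc]
      rw [if_neg (by omega : ¬ j+1 = m+2), if_pos (by omega : j+2 ≤ m+2),
        if_pos (by omega : j+2 ≤ m+2)]
      rcases j with _ | t
      · norm_num [hs0]
        have h1 : θ 1 ≠ 0 := hne 1 (by omega) (by omega)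
        have h2 : θ 2 ≠ 0 := hne 2 (by omega) (by omega)
        field_simp
        ring
      · have h1 : θ (t+1) ≠ 0 := hne (t+1) (by omega) (by omega)
        have h2 : θ (t+2) ≠ 0 := hne (t+2) (by omega) (by omega)
        have h3 : θ (t+3) ≠ 0 := hne (t+3) (by omega) (by omega)
        push_cast
        field_simp
        ring
    have hsplit : ∑ k ∈ Finset.range (m+1), (2 * φ1 k + φ2 k)
        = 2 * (∑ k ∈ Finset.range (m+1), φ1 k) + ∑ k ∈ Finset.range (m+1), φ2 k := by
      rw [Finset.sum_add_distrib, Finset.mul_sum]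
    have hlast1 : φ1 (m+1) = (U (m+2) / 2) * (((m:ℝ)+2)*(Fm (m+2) - Fm (m+1))) := by
      simp only [hφ1]
      rw [if_neg (by omega : ¬ m+1+2 ≤ m+2)]
      norm_num
    have hlast2 : φ2 (m+1) = U (m+2) * (θ (m+2) * U (m+2)
        - (((m:ℝ)+1)/2*(θ (m+2)-θ (m+1)) * U (m+1))) := by
      simp only [hφ2]
      rw [if_neg (by omega : ¬ m+1+2 ≤ m+2)]
      push_cast
      ring_nf
    rw [Finset.sum_range_succ φ1 (m+1), Finset.sum_range_succ φ2 (m+1)]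
    have hmast := master_tele aa cc (m+1)
    rw [hrow] at hsplit
    have h1 : θ (m+1) ≠ 0 := hne (m+1) (by omega) (by omega)
    have h2 : θ (m+2) ≠ 0 := hne (m+2) (by omega) (by omega)
    have hfin : ((m+1:ℕ):ℝ)/4 * aa (m+1+1) + ((m+1:ℕ):ℝ)/8 * cc (m+1)
        + (2 * φ1 (m+1) + φ2 (m+1))
        = ((m:ℝ)+2) * (θ (m+2))⁻¹ * (Fm (m+2))^2
          - ((m:ℝ)+2)/4 * (θ (m+2))⁻¹ * (Fm (m+1) - Fm (m+2))^2 := by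
      rw [hlast1, hlast2]
      simp only [haa, hcc, hU]
      rw [show m+1+1 = m+2 from rfl, hsval (m+1), hsval m]
      push_cast
      field_simp
      ring
    calc 2 * ((∑ k ∈ Finset.range (m+1), φ1 k) + φ1 (m+1))
          + ((∑ k ∈ Finset.range (m+1), φ2 k) + φ2 (m+1))
        = (2 * (∑ k ∈ Finset.range (m+1), φ1 k) + ∑ k ∈ Finset.range (m+1), φ2 k)
          + (2 * φ1 (m+1) + φ2 (m+1)) := by ring
      _ = (((m+1:ℕ):ℝ)/4 * aa (m+1+1) + ((m+1:ℕ):ℝ)/8 * cc (m+1))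
          + (2 * φ1 (m+1) + φ2 (m+1)) := by rw [← hsplit, hmast]
      _ = _ := hfin
  -- conclude
  rw [hS1, hS2, hTrf, hℓ]
  have hx : (0:ℝ) ≤ (θ (m+2))⁻¹ := le_of_lt (inv_pos.mpr (hθ (m+2) (by omega) le_rfl))
  have hpos : (0:ℝ) ≤ ((m:ℝ)+2) * h * (θ (m+2))⁻¹ * (Fm (m+1) - Fm (m+2))^2 := by
    have : (0:ℝ) ≤ ((m:ℝ)+2) := by positivity
    have := mul_nonneg (mul_nonneg (mul_nonneg this hh.le) hx) (sq_nonneg (Fm (m+1) - Fm (m+2)))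
    linarith
  have e0 : (∑ k ∈ Finset.range (m+2), φ1 k)
      = (((m:ℝ)+2) * (θ (m+2))⁻¹ * (Fm (m+2))^2
        - ((m:ℝ)+2)/4 * (θ (m+2))⁻¹ * (Fm (m+1) - Fm (m+2))^2
        - (∑ k ∈ Finset.range (m+2), φ2 k)) / 2 := by linarith
  rw [e0]
  push_cast
  nlinarith [hpos]
end

section
/- Let θ_1,...,θ_N > 0 and 0 < c < 1. If for every i ∈ {1,...,N-1} the inequality i²(θ_{i+1}-θ_i)² / ((1-c)² θ_{i+1} θ_i) < 1/cos²(π/(N+1)) holds, then the symmetric tridiagonal matrix T with diagonal entries (1-c)θ_i and off-diagonal entries T_{i,i+1} = T_{i+1,i} = -(i/2)(θ_{i+1}-θ_i) is positive definite. -/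
open Finset Matrix

lemma amgm13 (u v p q : ℝ) (hu : 0 < u) (hv : 0 < v) :
    2*(p*q) ≤ v/u*p^2 + u/v*q^2 := by
  have key : v/u*p^2 + u/v*q^2 - 2*(p*q) = (v*p - u*q)^2/(u*v) := by
    field_simp; ring
  nlinarith [div_nonneg (sq_nonneg (v*p - u*q)) (le_of_lt (mul_pos hu hv))]

lemma sinrec13 (t : ℝ) (k : ℕ) :
    Real.sin ((k:ℝ)*t) + Real.sin (((k:ℝ)+2)*t) = 2*Real.cos t * Real.sin (((k:ℝ)+1)*t) := by
  rw [show (k:ℝ)*t = ((k:ℝ)+1)*t - t by ring, show ((k:ℝ)+2)*t = ((k:ℝ)+1)*t + t by ring,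
    Real.sin_sub, Real.sin_add]
  ring

lemma kiney13 (N : ℕ) (hN : 1 ≤ N) (y : ℕ → ℝ) :
    ∑ i ∈ range (N-1), 2*(|y i| * |y (i+1)|)
      ≤ 2 * Real.cos (Real.pi/(N+1)) * ∑ i ∈ range N, y i ^ 2 := by
  set t : ℝ := Real.pi/(N+1) with ht
  set w : ℕ → ℝ := fun k => Real.sin ((k:ℝ)*t) with hw
  have hNpos : (0:ℝ) < (N:ℝ) + 1 := by positivity
  have hwpos : ∀ k, 1 ≤ k → k ≤ N → 0 < w k := by
    intro k h1 h2
    apply Real.sin_pos_of_pos_of_lt_pi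
    · have : (0:ℝ) < (k:ℝ) := by exact_mod_cast h1
      positivity
    · rw [ht, ← mul_div_assoc, div_lt_iff₀ hNpos]
      have : (k:ℝ) ≤ (N:ℝ) := by exact_mod_cast h2
      nlinarith [Real.pi_pos]
  have hw0 : w 0 = 0 := by simp [hw]
  have hwN1 : w (N+1) = 0 := by
    have : ((N+1:ℕ):ℝ) * t = Real.pi := by
      rw [ht]; push_cast; field_simp
    simp only [hw, this, Real.sin_pi]
  have hrec : ∀ k, w k + w (k+2) = 2*Real.cos t * w (k+1) := by
    intro k
    have := sinrec13 t k
    simpa [hw, Nat.cast_add, add_mul] using by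
      convert this using 3 <;> push_cast <;> ring
  have hterm : ∀ i ∈ range (N-1), 2*(|y i| * |y (i+1)|)
      ≤ w (i+2)/w (i+1) * (y i)^2 + w (i+1)/w (i+2) * (y (i+1))^2 := by
    intro i hi
    have hi' := mem_range.mp hi
    have h1 : 0 < w (i+1) := hwpos (i+1) (by omega) (by omega)
    have h2 : 0 < w (i+2) := hwpos (i+2) (by omega) (by omega)
    calc 2*(|y i| * |y (i+1)|)
        ≤ w (i+2)/w (i+1) * |y i|^2 + w (i+1)/w (i+2) * |y (i+1)|^2 :=
          amgm13 (w (i+1)) (w (i+2)) _ _ h1 h2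
      _ = w (i+2)/w (i+1) * (y i)^2 + w (i+1)/w (i+2) * (y (i+1))^2 := by
          rw [sq_abs, sq_abs]
  have hsum := Finset.sum_le_sum hterm
  refine le_trans hsum ?_
  have hA : ∑ i ∈ range (N-1), (w (i+2)/w (i+1) * (y i)^2 + w (i+1)/w (i+2) * (y (i+1))^2)
      = (∑ i ∈ range (N-1), w (i+2)/w (i+1) * (y i)^2)
      + (∑ i ∈ range (N-1), w (i+1)/w (i+2) * (y (i+1))^2) := Finset.sum_add_distrib
  rw [hA]
  have hN' : N - 1 + 1 = N := by omega
  have hA1 : ∑ i ∈ range (N-1), w (i+2)/w (i+1) * (y i)^2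
      = ∑ i ∈ range N, w (i+2)/w (i+1) * (y i)^2 := by
    rw [← hN', Finset.sum_range_succ]
    have h0 : w (N-1+2) = 0 := by
      have h2 : N - 1 + 2 = N + 1 := by omega
      rw [h2, hwN1]
    rw [h0]
    simp
  have hA2 : ∑ i ∈ range (N-1), w (i+1)/w (i+2) * (y (i+1))^2
      = ∑ i ∈ range N, w i/w (i+1) * (y i)^2 := by
    have := Finset.sum_range_succ' (fun k => w k/w (k+1) * (y k)^2) (N-1)
    rw [hN'] at this
    rw [this, hw0]
    simp
  rw [hA1, hA2, ← Finset.sum_add_distrib, Finset.mul_sum]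
  refine le_of_eq (Finset.sum_congr rfl fun i hi => ?_)
  have hi' := mem_range.mp hi
  have h1 : w (i+1) ≠ 0 := ne_of_gt (hwpos (i+1) (by omega) (by omega))
  have hr := hrec i
  field_simp
  ring_nf
  ring_nf at hr
  nlinarith [hr]

lemma tridiag_sum13 (N : ℕ) (d e : ℕ → ℝ) (g : ℕ → ℕ → ℝ)
    (hg : ∀ i j, i < N → j < N → g i j =
      (if i = j then d i else 0) + (if j = i+1 then e i else 0) + (if i = j+1 then e j else 0)) :
    ∑ i ∈ range N, ∑ j ∈ range N, g i j
      = ∑ i ∈ range N, d i + 2 * ∑ i ∈ range (N-1), e i := by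
  have h1 : ∑ i ∈ range N, ∑ j ∈ range N, g i j =
      (∑ i ∈ range N, ∑ j ∈ range N, (if i = j then d i else 0))
      + (∑ i ∈ range N, ∑ j ∈ range N, (if j = i+1 then e i else 0))
      + (∑ i ∈ range N, ∑ j ∈ range N, (if i = j+1 then e j else 0)) := by
    rw [← Finset.sum_add_distrib, ← Finset.sum_add_distrib]
    refine Finset.sum_congr rfl fun i hi => ?_
    rw [← Finset.sum_add_distrib, ← Finset.sum_add_distrib]
    refine Finset.sum_congr rfl fun j hj => ?_
    exact hg i j (mem_range.mp hi) (mem_range.mp hj)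
  have hd : ∑ i ∈ range N, ∑ j ∈ range N, (if i = j then d i else 0)
      = ∑ i ∈ range N, d i := by
    refine Finset.sum_congr rfl fun i hi => ?_
    simp [Finset.sum_ite_eq, hi]
  have he : ∀ f : ℕ → ℝ, ∑ i ∈ range N, ∑ j ∈ range N, (if j = i+1 then f i else 0)
      = ∑ i ∈ range (N-1), f i := by
    intro f
    have h2 : ∑ i ∈ range N, ∑ j ∈ range N, (if j = i+1 then f i else 0)
        = ∑ i ∈ range N, (if i+1 ∈ range N then f i else 0) := by
      refine Finset.sum_congr rfl fun i _ => ?_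
      exact Finset.sum_ite_eq' (range N) (i+1) (fun _ => f i)
    rw [h2]
    rw [← Finset.sum_subset (Finset.range_subset_range.mpr (Nat.sub_le N 1))]
    · refine Finset.sum_congr rfl fun i hi => ?_
      have := mem_range.mp hi
      rw [if_pos (mem_range.mpr (by omega))]
    · intro i hi hni
      have h3 := mem_range.mp hi
      have h4 : ¬ (i < N - 1) := fun h => hni (mem_range.mpr h)
      rw [if_neg (by simp only [mem_range]; omega)]
  have hsub : ∑ i ∈ range N, ∑ j ∈ range N, (if i = j+1 then e j else 0)
      = ∑ i ∈ range (N-1), e i := by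
    rw [Finset.sum_comm]
    exact he e
  rw [h1, hd, he e, hsub]; ring

lemma core13 (N : ℕ) (hN : 2 ≤ N) (a o X : ℕ → ℝ)
    (ha : ∀ i, i < N → 0 < a i)
    (ho : ∀ i, i < N-1 → (2*|o i| * Real.cos (Real.pi/(N+1)))^2 < a i * a (i+1))
    (hXne : ∃ i, i < N ∧ X i ≠ 0) :
    0 < (∑ i ∈ range N, a i * X i^2)
        + 2 * ∑ i ∈ range (N-1), -(o i * (X i * X (i+1))) := by
  set β := Real.cos (Real.pi/(N+1)) with hβdef
  have hNpos : (0:ℝ) < (N:ℝ) + 1 := by positivity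
  have hβ : 0 < β := by
    rw [hβdef]
    apply Real.cos_pos_of_mem_Ioo
    constructor
    · have : 0 < Real.pi/((N:ℝ)+1) := by positivity
      nlinarith [Real.pi_pos]
    · rw [div_lt_div_iff₀ hNpos (by norm_num : (0:ℝ) < 2)]
      have h2 : (2:ℝ) ≤ (N:ℝ) := by exact_mod_cast hN
      nlinarith [Real.pi_pos]
  set y : ℕ → ℝ := fun i => Real.sqrt (a i) * X i with hydef
  have hsq : ∀ i, i < N → a i * X i^2 = y i^2 := by
    intro i hi
    rw [hydef]
    simp only []
    rw [mul_pow, Real.sq_sqrt (ha i hi).le]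
  have hyabs : ∀ i, |y i| = Real.sqrt (a i) * |X i| := by
    intro i
    rw [hydef]
    simp only []
    rw [abs_mul, abs_of_nonneg (Real.sqrt_nonneg _)]
  -- strict sqrt bound
  have hoi : ∀ i ∈ range (N-1), 2 * |o i| * β < Real.sqrt (a i * a (i+1)) := by
    intro i hi
    have hi' := mem_range.mp hi
    rw [← Real.sqrt_sq (by positivity : (0:ℝ) ≤ 2 * |o i| * β)]
    exact Real.sqrt_lt_sqrt (sq_nonneg _) (ho i hi')
  have hsqrtpos : ∀ i ∈ range (N-1), 0 < Real.sqrt (a i * a (i+1)) := by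
    intro i hi
    have hi' := mem_range.mp hi
    exact Real.sqrt_pos.mpr (mul_pos (ha i (by omega)) (ha (i+1) (by omega)))
  set f : ℕ → ℝ := fun i => 2 * |o i| * β / Real.sqrt (a i * a (i+1)) with hfdef
  have hne : (range (N-1)).Nonempty := Finset.nonempty_range_iff.mpr (by omega)
  set m : ℝ := (range (N-1)).sup' hne f with hmdef
  have hm1 : m < 1 := by
    rw [hmdef, Finset.sup'_lt_iff hne]
    intro i hi
    exact (div_lt_one (hsqrtpos i hi)).mpr (hoi i hi)
  have h0mem : 0 ∈ range (N-1) := mem_range.mpr (by omega)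
  have hm0 : 0 ≤ m := by
    refine le_trans ?_ (Finset.le_sup' f h0mem)
    rw [hfdef]
    positivity
  -- per-term bound on cross terms
  have hE : ∀ i ∈ range (N-1),
      -(m/(2*β) * (|y i| * |y (i+1)|)) ≤ -(o i * (X i * X (i+1))) := by
    intro i hi
    have key : |o i * (X i * X (i+1))| ≤ m/(2*β) * (|y i| * |y (i+1)|) := by
      rw [abs_mul, abs_mul, div_mul_eq_mul_div, le_div_iff₀ (by positivity : (0:ℝ) < 2*β)]
      have h1 : 2 * |o i| * β = f i * Real.sqrt (a i * a (i+1)) :=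
        (div_mul_cancel₀ _ (ne_of_gt (hsqrtpos i hi))).symm
      have h2 : f i ≤ m := Finset.le_sup' f hi
      have hi' := mem_range.mp hi
      have hq : Real.sqrt (a i * a (i+1)) = Real.sqrt (a i) * Real.sqrt (a (i+1)) :=
        Real.sqrt_mul (ha i (by omega)).le _
      calc |o i| * (|X i| * |X (i+1)|) * (2*β)
          = (2 * |o i| * β) * (|X i| * |X (i+1)|) := by ring
        _ = f i * ((Real.sqrt (a i) * |X i|) * (Real.sqrt (a (i+1)) * |X (i+1)|)) := by
            rw [h1, hq]; ring
        _ = f i * (|y i| * |y (i+1)|) := by rw [hyabs i, hyabs (i+1)]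
        _ ≤ m * (|y i| * |y (i+1)|) :=
            mul_le_mul_of_nonneg_right h2 (by positivity)
    have := le_abs_self (o i * (X i * X (i+1)))
    linarith
  have hEsum : -(m/(2*β)) * (∑ i ∈ range (N-1), (|y i| * |y (i+1)|))
      ≤ ∑ i ∈ range (N-1), -(o i * (X i * X (i+1))) := by
    have h1 : -(m/(2*β)) * (∑ i ∈ range (N-1), (|y i| * |y (i+1)|))
        = ∑ i ∈ range (N-1), -(m/(2*β) * (|y i| * |y (i+1)|)) := by
      rw [Finset.sum_neg_distrib, ← Finset.mul_sum]; ring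
    rw [h1]
    exact Finset.sum_le_sum hE
  have hkin := kiney13 N (by omega) y
  rw [← hβdef] at hkin
  have hcross : ∑ i ∈ range (N-1), (|y i| * |y (i+1)|) ≤ β * ∑ i ∈ range N, y i^2 := by
    have h2 : ∑ i ∈ range (N-1), 2*(|y i| * |y (i+1)|)
        = 2 * ∑ i ∈ range (N-1), (|y i| * |y (i+1)|) := by rw [Finset.mul_sum]
    rw [h2] at hkin
    linarith
  have hsums : ∑ i ∈ range N, a i * X i ^ 2 = ∑ i ∈ range N, y i^2 :=
    Finset.sum_congr rfl fun i hi => hsq i (mem_range.mp hi)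
  obtain ⟨k, hk, hXk⟩ := hXne
  have hyk : y k ≠ 0 := mul_ne_zero (ne_of_gt (Real.sqrt_pos.mpr (ha k hk))) hXk
  have hypos : 0 < ∑ i ∈ range N, y i^2 := by
    have h1 : y k^2 ≤ ∑ i ∈ range N, y i^2 :=
      Finset.single_le_sum (fun i _ => sq_nonneg (y i)) (mem_range.mpr hk)
    have h2 : 0 < y k^2 := lt_of_le_of_ne (sq_nonneg _) (Ne.symm (pow_ne_zero 2 hyk))
    linarith
  have hk0 : 0 ≤ m/(2*β) := by positivity
  have h3 := mul_le_mul_of_nonneg_left hcross hk0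
  have hfin : m/(2*β) * (β * ∑ i ∈ range N, y i^2) = m/2 * ∑ i ∈ range N, y i^2 := by
    field_simp
  have hEfinal : -(m/2) * (∑ i ∈ range N, y i^2)
      ≤ ∑ i ∈ range (N-1), -(o i * (X i * X (i+1))) := by
    calc -(m/2) * (∑ i ∈ range N, y i^2)
        = -(m/(2*β) * (β * ∑ i ∈ range N, y i^2)) := by rw [hfin]; ring
      _ ≤ -(m/(2*β)) * (∑ i ∈ range (N-1), (|y i| * |y (i+1)|)) := by
          rw [neg_mul]; exact neg_le_neg h3
      _ ≤ _ := hEsum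
  rw [hsums]
  nlinarith [hEfinal, hypos, hm1,
    mul_pos (show (0:ℝ) < 1 - m by linarith) hypos]

/-- Condition (D1) implies positive definiteness of T = (1-c)diag(θ) - O. -/
theorem stmt13 (N : ℕ) (hN : 2 ≤ N) (θ : ℕ → ℝ) (hθ : ∀ i, 1 ≤ i → i ≤ N → 0 < θ i)
    (c : ℝ) (hc : 0 < c) (hc1 : c < 1)
    (hD1 : ∀ i, 1 ≤ i → i ≤ N - 1 →
      (i : ℝ)^2 * (θ (i+1) - θ i)^2 / ((1 - c)^2 * θ (i+1) * θ i)
        < 1 / Real.cos (Real.pi / (N + 1)) ^ 2)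
    (T : Matrix (Fin N) (Fin N) ℝ)
    (hT : ∀ i j : Fin N, T i j =
      if (i : ℕ) = (j : ℕ) then (1 - c) * θ ((i : ℕ) + 1)
      else if (j : ℕ) = (i : ℕ) + 1 then
        -(((i : ℕ) + 1 : ℝ)) / 2 * (θ ((i : ℕ) + 2) - θ ((i : ℕ) + 1))
      else if (i : ℕ) = (j : ℕ) + 1 then
        -(((j : ℕ) + 1 : ℝ)) / 2 * (θ ((j : ℕ) + 2) - θ ((j : ℕ) + 1))
      else 0) :
    T.PosDef := by
  have hNpos : (0:ℝ) < (N:ℝ) + 1 := by positivity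
  set β := Real.cos (Real.pi / ((N:ℝ) + 1)) with hβdef
  have hβ : 0 < β := by
    rw [hβdef]
    apply Real.cos_pos_of_mem_Ioo
    constructor
    · have : 0 < Real.pi/((N:ℝ)+1) := by positivity
      nlinarith [Real.pi_pos]
    · rw [div_lt_div_iff₀ hNpos (by norm_num : (0:ℝ) < 2)]
      have h2 : (2:ℝ) ≤ (N:ℝ) := by exact_mod_cast hN
      nlinarith [Real.pi_pos]
  set a : ℕ → ℝ := fun i => (1 - c) * θ (i+1) with hadef
  set o : ℕ → ℝ := fun i => ((i:ℝ)+1)/2 * (θ (i+2) - θ (i+1)) with hodef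
  have ha : ∀ i, i < N → 0 < a i := by
    intro i hi
    exact mul_pos (by linarith) (hθ (i+1) (by omega) (by omega))
  have ho : ∀ i, i < N-1 → (2 * |o i| * β)^2 < a i * a (i+1) := by
    intro i hi
    have h := hD1 (i+1) (by omega) (by omega)
    have hq : 0 < (1 - c)^2 * θ (i+1+1) * θ (i+1) :=
      mul_pos (mul_pos (pow_pos (by linarith) 2) (hθ (i+2) (by omega) (by omega)))
        (hθ (i+1) (by omega) (by omega))
    have hβ2 : 0 < β^2 := by positivity
    rw [div_lt_div_iff₀ hq hβ2] at h
    push_cast at h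
    have e1 : (2 * |o i| * β)^2 = ((i:ℝ)+1)^2 * (θ (i+2) - θ (i+1))^2 * β^2 := by
      rw [mul_pow, mul_pow, sq_abs, hodef]
      ring
    have e2 : a i * a (i+1) = (1-c)^2 * θ (i+2) * θ (i+1) := by
      rw [hadef]; push_cast; ring
    rw [e1, e2]
    have h' : ((i:ℝ)+1)^2 * (θ (i+2) - θ (i+1))^2 * β^2
        < 1 * ((1-c)^2 * θ (i+2) * θ (i+1)) := by
      convert h using 3 <;> norm_num
    linarith
  rw [Matrix.posDef_iff_dotProduct_mulVec]
  constructor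
  · -- Hermitian
    ext i j
    rw [Matrix.conjTranspose_apply, hT j i, hT i j]
    split_ifs <;> first | rfl | omega | simp_all
  · intro x hx
    have hsx : star x = x := by
      funext i; simp
    rw [hsx]
    set X : ℕ → ℝ := fun n => if h : n < N then x ⟨n, h⟩ else 0 with hXdef
    have hX : ∀ i : Fin N, X (i:ℕ) = x i := by
      intro i
      rw [hXdef]
      simp only [i.isLt, dif_pos]
    set Tn : ℕ → ℕ → ℝ := fun i j =>
      if i = j then (1 - c) * θ (i + 1)
      else if j = i + 1 then -(((i:ℝ) + 1)) / 2 * (θ (i + 2) - θ (i + 1))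
      else if i = j + 1 then -(((j:ℝ) + 1)) / 2 * (θ (j + 2) - θ (j + 1))
      else 0 with hTndef
    have hTn : ∀ i j : Fin N, T i j = Tn (i:ℕ) (j:ℕ) := by
      intro i j
      rw [hT i j, hTndef]
    have hQ : x ⬝ᵥ T *ᵥ x = ∑ i ∈ range N, ∑ j ∈ range N, X i * (Tn i j * X j) := by
      calc x ⬝ᵥ T *ᵥ x = ∑ i : Fin N, ∑ j : Fin N, X (i:ℕ) * (Tn (i:ℕ) (j:ℕ) * X (j:ℕ)) := by
            simp only [dotProduct, mulVec, Finset.mul_sum]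
            exact Finset.sum_congr rfl fun i _ => Finset.sum_congr rfl fun j _ => by
              rw [hX, hX, hTn]
        _ = ∑ i : Fin N, ∑ j ∈ range N, X (i:ℕ) * (Tn (i:ℕ) j * X j) :=
            Finset.sum_congr rfl fun i _ =>
              Fin.sum_univ_eq_sum_range (fun j => X (i:ℕ) * (Tn (i:ℕ) j * X j)) N
        _ = ∑ i ∈ range N, ∑ j ∈ range N, X i * (Tn i j * X j) :=
            Fin.sum_univ_eq_sum_range (fun i => ∑ j ∈ range N, X i * (Tn i j * X j)) N
    have hdec : ∑ i ∈ range N, ∑ j ∈ range N, X i * (Tn i j * X j)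
        = ∑ i ∈ range N, (a i * X i ^ 2) + 2 * ∑ i ∈ range (N-1), -(o i * (X i * X (i+1))) := by
      apply tridiag_sum13 N (fun i => a i * X i ^ 2) (fun i => -(o i * (X i * X (i+1))))
      intro i j hi hj
      rw [hTndef, hadef, hodef]
      simp only []
      split_ifs <;> first
        | omega
        | (subst_vars; push_cast; ring)
    rw [hQ, hdec]
    apply core13 N hN a o X ha ho
    obtain ⟨k, hk⟩ := Function.ne_iff.mp hx
    exact ⟨(k:ℕ), k.isLt, by rw [hX]; exact hk⟩
end
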